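/- Let G be a finite simple graph with edge weights w : E(G) → ℝ and let S ⊆ V(G). Then there exists a finite simple graph H with real edge weights such that S ⊆ V(H), |V(H)| ≤ 2·max(|S|,1), and for all u, v ∈ S and every real t: G contains a u–v path all of whose edges have weight less than t if and only if H contains such a path. -/

import Mathlib

open scoped Classical

/-- A finite simple graph on a subset of an ambient vertex type `U`. -/
structure FinGraph (U : Type) where
  verts : Finset U
  G : SimpleGraph U
  support : ∀ ⦃u v : U⦄, G.Adj u v → u ∈ verts ∧ v ∈ verts

/-- `G` contains a `u`–`v` path all of whose edges have weight (under `w`) less than `t`. -/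
def BottleneckConn {U : Type} (G : SimpleGraph U) (w : Sym2 U → ℝ) (u v : U) (t : ℝ) : Prop :=
  ∃ p : G.Walk u v, p.IsPath ∧ ∀ e ∈ p.edges, w e < t

/-- Walk version (no path requirement). -/
def WConn {U : Type} (G : SimpleGraph U) (w : Sym2 U → ℝ) (u v : U) (t : ℝ) : Prop :=
  ∃ p : G.Walk u v, ∀ e ∈ p.edges, w e < t

lemma wconn_iff {U : Type} [DecidableEq U] (G : SimpleGraph U) (w : Sym2 U → ℝ)
    (u v : U) (t : ℝ) : WConn G w u v t ↔ BottleneckConn G w u v t := by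
  constructor
  · rintro ⟨p, hp⟩
    exact ⟨p.bypass, p.bypass_isPath, fun e he => hp e (p.edges_bypass_subset he)⟩
  · rintro ⟨p, _, hp⟩; exact ⟨p, hp⟩

lemma bconn_symm {U : Type} {G : SimpleGraph U} {w : Sym2 U → ℝ}
    {u v : U} {t : ℝ} (h : BottleneckConn G w u v t) : BottleneckConn G w v u t := by
  obtain ⟨p, hp, he⟩ := h
  exact ⟨p.reverse, hp.reverse, fun e hme => he e (by
    simpa [SimpleGraph.Walk.edges_reverse] using hme)⟩

lemma bconn_mono {U : Type} {G : SimpleGraph U} {w : Sym2 U → ℝ}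
    {u v : U} {t t' : ℝ} (h : BottleneckConn G w u v t) (htt : t ≤ t') :
    BottleneckConn G w u v t' := by
  obtain ⟨p, hp, he⟩ := h
  exact ⟨p, hp, fun e hme => lt_of_lt_of_le (he e hme) htt⟩

theorem compress_graph_for_bottleneck {U : Type} [DecidableEq U]
    (G : FinGraph U) (w : Sym2 U → ℝ) (S : Finset U) (hS : S ⊆ G.verts) :
    ∃ (H : FinGraph U) (wH : Sym2 U → ℝ),
      S ⊆ H.verts ∧ H.verts.card ≤ 2 * max S.card 1 ∧
      ∀ u ∈ S, ∀ v ∈ S, ∀ t : ℝ,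
        BottleneckConn G.G w u v t ↔ BottleneckConn H.G wH u v t := by
  classical
  set B : U → U → Set ℝ := fun u v => {t | BottleneckConn G.G w u v t} with hB
  have hBsymm : ∀ u v, B u v = B v u := by
    intro u v
    ext t
    exact ⟨fun h => bconn_symm h, fun h => bconn_symm h⟩
  -- lower bound for B u v when u ≠ v
  have hbdd : ∀ u v : U, u ≠ v → BddBelow (B u v) := by
    intro u v huv
    by_cases hne : (G.verts ×ˢ G.verts).Nonempty
    · refine ⟨((G.verts ×ˢ G.verts).image (fun pr : U × U => w s(pr.1, pr.2))).min'
        (hne.image _), ?_⟩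
      rintro t ⟨p, hp, he⟩
      cases p with
      | nil => exact absurd rfl huv
      | cons h q =>
        rename_i x
        have hx : s(u, x) ∈ (SimpleGraph.Walk.cons h q).edges := by simp
        have hw := he _ hx
        have hmem : w s(u, x) ∈
            ((G.verts ×ˢ G.verts).image (fun pr : U × U => w s(pr.1, pr.2))) := by
          refine Finset.mem_image.mpr ⟨(u, x), ?_, rfl⟩
          have := G.support h
          exact Finset.mem_product.mpr ⟨this.1, this.2⟩
        exact le_of_lt (lt_of_le_of_lt (Finset.min'_le _ _ hmem) hw)
    · refine ⟨0, ?_⟩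
      rintro t ⟨p, hp, he⟩
      cases p with
      | nil => exact absurd rfl huv
      | cons h q =>
        exfalso
        rename_i x
        have hxy := G.support h
        exact hne ⟨(u, x), Finset.mem_product.mpr ⟨hxy.1, hxy.2⟩⟩
  -- the compressed graph
  refine ⟨⟨S, ⟨fun u v => u ≠ v ∧ u ∈ S ∧ v ∈ S ∧ (B u v).Nonempty,
      ?_, ?_⟩, ?_⟩, Sym2.lift ⟨fun u v => sInf (B u v), ?_⟩, le_refl S, ?_, ?_⟩
  · -- symmetric
    constructor
    rintro u v ⟨h1, h2, h3, h4⟩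
    exact ⟨h1.symm, h3, h2, by rw [hBsymm]; exact h4⟩
  · -- loopless
    constructor
    rintro u ⟨h1, _⟩
    exact h1 rfl
  · -- support
    rintro u v ⟨_, h2, h3, _⟩
    exact ⟨h2, h3⟩
  · -- symmetry of the weight function
    intro u v
    simp only [hBsymm u v]
  · -- cardinality
    show S.card ≤ 2 * max S.card 1
    have := le_max_left S.card 1
    omega
  · -- main equivalence
    intro u hu v hv t
    constructor
    · -- G → H
      rintro ⟨p, hp, he⟩
      by_cases huv : u = v
      · subst huv
        exact ⟨SimpleGraph.Walk.nil, by simp, by simp⟩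
      · -- p has at least one edge; get max weight
        have hBne : (B u v).Nonempty := ⟨t, ⟨p, hp, he⟩⟩
        have hadj : u ≠ v ∧ u ∈ S ∧ v ∈ S ∧ (B u v).Nonempty := ⟨huv, hu, hv, hBne⟩
        have hEne : p.edges ≠ [] := by
          intro h0
          cases p with
          | nil => exact huv rfl
          | cons h q => simp [SimpleGraph.Walk.edges_cons] at h0
        have hTne : (p.edges.toFinset.image w).Nonempty := by
          refine Finset.Nonempty.image ?_ _
          rcases List.exists_mem_of_ne_nil _ hEne with ⟨e, hee⟩
          exact ⟨e, List.mem_toFinset.mpr hee⟩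
        set M : ℝ := (p.edges.toFinset.image w).max' hTne with hM
        have hMlt : M < t := by
          obtain ⟨e, hee, hweq⟩ := Finset.mem_image.mp ((p.edges.toFinset.image w).max'_mem hTne)
          rw [hM, ← hweq]
          exact he e (List.mem_toFinset.mp hee)
        have hmid : (M + t) / 2 ∈ B u v := by
          refine ⟨p, hp, fun e hme => ?_⟩
          have h1 : w e ≤ M :=
            Finset.le_max' _ _ (Finset.mem_image.mpr ⟨e, List.mem_toFinset.mpr hme, rfl⟩)
          linarith
        have hsinf : sInf (B u v) < t := by
          have := csInf_le (hbdd u v huv) hmid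
          linarith
        -- single-edge path in H
        refine ⟨SimpleGraph.Walk.cons hadj SimpleGraph.Walk.nil, ?_, ?_⟩
        · simp [SimpleGraph.Walk.cons_isPath_iff, huv]
        · intro e hme
          simp only [SimpleGraph.Walk.edges_cons, SimpleGraph.Walk.edges_nil,
            List.mem_singleton] at hme
          subst hme
          simpa using hsinf
    · -- H → G
      rintro ⟨p, hp, he⟩
      rw [← wconn_iff]
      clear hp hu hv
      induction p with
      | nil => exact ⟨SimpleGraph.Walk.nil, by simp⟩
      | cons h q ih =>
        rename_i a x b
        obtain ⟨hne, _, _, hBne⟩ := h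
        have hedge : Sym2.lift ⟨fun u v => sInf (B u v), by intro u v; simp only [hBsymm u v]⟩
            s(a, x) < t := he _ (by simp)
        have hsinf : sInf (B a x) < t := by simpa using hedge
        obtain ⟨s, hs, hst⟩ := exists_lt_of_csInf_lt hBne hsinf
        have hax : BottleneckConn G.G w a x t := bconn_mono hs (le_of_lt hst)
        obtain ⟨p1, _, he1⟩ := hax
        obtain ⟨p2, he2⟩ := ih (fun e hme => he e (by simp [hme]))
        refine ⟨p1.append p2, fun e hme => ?_⟩
        rw [SimpleGraph.Walk.edges_append] at hme
        rcases List.mem_append.mp hme with h1 | h2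
        · exact he1 e h1
        · exact he2 e h2
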